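/- Define q(z,h) = cos(h·√(1−z²))·z on [−1,1] for fixed h > 0, h not an odd multiple of π/2. All zeros of q(·,h) in (−1,1) are simple (the derivative ∂q/∂z is nonzero there), and hence q changes sign at each of them. Consequently, for any m ≥ 1 and h in the open interval ((2m−1)π/2, (2m+1)π/2), there exists ε > 0 such that for every z₀ with |z₀| < ε, the equation z₀ = q(z,h) has at least 2m+1 solutions z ∈ [−1,1]. -/

import Mathlib

open Real Filter
open scoped Topology

/-- The scalar equation of the GIE method on the sphere. -/
noncomputable def q (z h : ℝ) : ℝ := Real.cos (h * Real.sqrt (1 - z ^ 2)) * z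

lemma q_neg (z h : ℝ) : q (-z) h = - q z h := by
  simp [q, neg_sq]

lemma cos_ne_zero' (h : ℝ) (hh : 0 < h) (hodd : ∀ j : ℕ, h ≠ (2 * (j : ℝ) + 1) * π / 2) :
    Real.cos h ≠ 0 := by
  intro hc
  rcases Real.cos_eq_zero_iff.1 hc with ⟨k, hk⟩
  have hk0 : 0 ≤ k := by
    by_contra hneg
    push_neg at hneg
    have h2 : (2 * (k:ℝ) + 1) ≤ -1 := by
      have : (k:ℝ) ≤ -1 := by exact_mod_cast Int.le_of_lt_add_one (by omega : k < 0)
      linarith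
    have : h ≤ -1 * π / 2 := by
      rw [hk]
      have hπ := Real.pi_pos
      apply div_le_div_of_nonneg_right _ (by norm_num)
      nlinarith
    nlinarith [Real.pi_pos]
  exact hodd k.toNat (by rw [hk]; congr 2; rw [show ((k.toNat:ℕ):ℝ) = ((k.toNat : ℤ) : ℝ) by push_cast; ring, Int.toNat_of_nonneg hk0])

lemma hasDerivAt_q (h z : ℝ) (hz : z ^ 2 < 1) :
    HasDerivAt (fun w => q w h)
      (Real.cos (h * Real.sqrt (1 - z ^ 2))
        + h * z ^ 2 / Real.sqrt (1 - z ^ 2) * Real.sin (h * Real.sqrt (1 - z ^ 2))) z := by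
  have h1 : (0:ℝ) < 1 - z ^ 2 := by linarith
  have hs : 0 < Real.sqrt (1 - z ^ 2) := Real.sqrt_pos.2 h1
  have d1 : HasDerivAt (fun w : ℝ => 1 - w ^ 2) (-2 * z) z := by
    simpa using ((hasDerivAt_pow 2 z).const_sub 1)
  have d2 : HasDerivAt (fun w : ℝ => Real.sqrt (1 - w ^ 2)) (-z / Real.sqrt (1 - z ^ 2)) z := by
    have := (Real.hasDerivAt_sqrt (ne_of_gt h1)).comp z d1
    refine this.congr_deriv ?_
    field_simp
  have d3 : HasDerivAt (fun w : ℝ => h * Real.sqrt (1 - w ^ 2))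
      (h * (-z / Real.sqrt (1 - z ^ 2))) z := d2.const_mul h
  have d4 : HasDerivAt (fun w : ℝ => Real.cos (h * Real.sqrt (1 - w ^ 2)))
      (-Real.sin (h * Real.sqrt (1 - z ^ 2)) * (h * (-z / Real.sqrt (1 - z ^ 2)))) z :=
    (Real.hasDerivAt_cos _).comp z d3
  have d5 := d4.mul (hasDerivAt_id z)
  refine d5.congr_deriv ?_
  field_simp
  simp only [id_eq]
  ring

lemma analyticAt_q (h x : ℝ) (hx : x ^ 2 < 1) : AnalyticAt ℝ (fun w => q w h) x := by
  set F : ℂ → ℂ := fun w => Complex.cos (h * (1 - w ^ 2) ^ (1/2 : ℂ)) * w with hF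
  have hmem : (1 - (x:ℂ) ^ 2) ∈ Complex.slitPlane := by
    rw [Complex.mem_slitPlane_iff]
    left
    push_cast
    simp only [Complex.sub_re, Complex.one_re, Complex.ofReal_re]
    norm_num
    push_cast
    rw [show ((x:ℂ))^2 = ((x^2 : ℝ) : ℂ) by push_cast; ring]
    rw [Complex.ofReal_re]
    linarith
  have hFa : AnalyticAt ℂ F (x : ℂ) := by
    apply AnalyticAt.mul _ analyticAt_id
    apply (Complex.differentiable_cos.analyticAt _).comp
    apply AnalyticAt.mul analyticAt_const
    exact AnalyticAt.cpow ((analyticAt_const).sub ((analyticAt_id).pow 2)) analyticAt_const hmem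
  -- restrict to ℝ
  have hG : AnalyticAt ℝ (fun t : ℝ => (F t).re) x := by
    have h1 : AnalyticAt ℝ (fun t : ℝ => F t) x :=
      (hFa.restrictScalars.comp (Complex.ofRealCLM.analyticAt x))
    exact AnalyticAt.comp (f := fun t : ℝ => F t) (g := fun z : ℂ => z.re) (Complex.reCLM.analyticAt (F x)) h1
  apply hG.congr
  have hopen : IsOpen {t : ℝ | t ^ 2 < 1} := isOpen_lt (by fun_prop) continuous_const
  filter_upwards [hopen.mem_nhds hx] with t ht
  replace ht : t ^ 2 < 1 := ht
  have h1t : (0:ℝ) ≤ 1 - t ^ 2 := by linarith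
  have e1 : (1 - (t:ℂ) ^ 2) = ((1 - t ^ 2 : ℝ) : ℂ) := by push_cast; ring
  have e2 : ((1 - t^2 : ℝ) : ℂ) ^ (1/2 : ℂ) = (((1 - t^2 : ℝ) ^ ((1:ℝ)/2) : ℝ) : ℂ) := by
    rw [show (1/2 : ℂ) = (((1:ℝ)/2 : ℝ) : ℂ) by norm_num, ← Complex.ofReal_cpow h1t]
  have e3 : (1 - t^2 : ℝ) ^ ((1:ℝ)/2) = Real.sqrt (1 - t^2) := (Real.rpow_natCast _ _ ▸ (Real.sqrt_eq_rpow _).symm)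
  show (F t).re = q t h
  rw [hF]
  simp only [e1, e2, e3]
  rw [show (h : ℂ) * ((Real.sqrt (1 - t^2) : ℝ) : ℂ) = ((h * Real.sqrt (1 - t^2) : ℝ) : ℂ) by push_cast; ring]
  rw [← Complex.ofReal_cos, ← Complex.ofReal_mul, Complex.ofReal_re]
  rfl

lemma continuous_q (h : ℝ) : Continuous (fun w => q w h) := by
  unfold q; fun_prop

lemma sq_lt_one_iff_mem : ∀ x : ℝ, x ^ 2 < 1 ↔ x ∈ Set.Ioo (-1:ℝ) 1 := by
  intro x
  constructor
  · intro hx; constructor <;> nlinarith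
  · rintro ⟨h1, h2⟩; nlinarith

lemma finite_sols (h z₀ : ℝ) (hz₀ : |z₀| < 1) (w : ℝ) (hw : w ^ 2 < 1) (hqw : q w h ≠ z₀) :
    {z ∈ Set.Icc (-1 : ℝ) 1 | q z h = z₀}.Finite := by
  by_contra hinf'
  have hinf : {z ∈ Set.Icc (-1 : ℝ) 1 | q z h = z₀}.Infinite := hinf'
  set S := {z ∈ Set.Icc (-1 : ℝ) 1 | q z h = z₀} with hS
  obtain ⟨x, hxK, hx⟩ := hinf.exists_accPt_of_subset_isCompact isCompact_Icc
    (fun z hz => hz.1)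
  have hfreq : ∃ᶠ y in 𝓝[≠] x, y ∈ S := by
    rw [frequently_nhdsWithin_iff]
    rw [accPt_iff_frequently] at hx
    exact hx.mono (fun y hy => ⟨hy.2, hy.1⟩)
  have hclosed : IsClosed S := by
    have : S = Set.Icc (-1:ℝ) 1 ∩ {z | q z h = z₀} := by
      ext z; simp [hS, Set.mem_sep_iff, and_comm]
    rw [this]
    exact isClosed_Icc.inter (isClosed_eq (continuous_q h) continuous_const)
  have hxS : x ∈ S := hclosed.closure_subset (mem_closure_iff_clusterPt.2 hx.clusterPt)
  -- x ≠ ±1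
  have hq1 : q 1 h = 1 := by simp [q]
  have hqm1 : q (-1) h = -1 := by norm_num [q]
  have hx2 : x ^ 2 < 1 := by
    rcases eq_or_lt_of_le hxK.2 with h1 | h1
    · exfalso; rw [← h1] at hq1; rw [hxS.2] at hq1
      rw [hq1, h1] at hz₀; simp at hz₀
    rcases eq_or_lt_of_le hxK.1 with h2 | h2
    · exfalso; rw [h2] at hqm1; rw [hxS.2] at hqm1
      rw [hqm1, ← h2] at hz₀; simp at hz₀
    nlinarith
  -- analytic identity theorem
  have hA : AnalyticOnNhd ℝ (fun z => q z h - z₀) (Set.Ioo (-1:ℝ) 1) := by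
    intro y hy
    exact (analyticAt_q h y ((sq_lt_one_iff_mem y).2 hy)).sub analyticAt_const
  have hEq := hA.eqOn_zero_of_preconnected_of_frequently_eq_zero
    (isPreconnected_Ioo) ((sq_lt_one_iff_mem x).1 hx2)
    (hfreq.mono (fun y hy => by simp [hy.2]))
  have := hEq ((sq_lt_one_iff_mem w).1 hw)
  simp only [Pi.zero_apply, sub_eq_zero] at this
  exact hqw this

lemma count_alt (f : ℝ → ℝ) (hf : Continuous f) (n : ℕ) (s : ℕ → ℝ) (z₀ : ℝ)
    (hmono : ∀ j, j ≤ n → s j < s (j+1))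
    (halt : ∀ j, j ≤ n → (f (s j) - z₀) * (f (s (j+1)) - z₀) < 0)
    (hmem : ∀ j, j ≤ n + 1 → s j ∈ Set.Icc (-1:ℝ) 1)
    (hfin : {z ∈ Set.Icc (-1 : ℝ) 1 | f z = z₀}.Finite) :
    n + 1 ≤ {z ∈ Set.Icc (-1 : ℝ) 1 | f z = z₀}.ncard := by
  have H : ∀ j : Fin (n+1), ∃ x, x ∈ Set.Ioo (s (j:ℕ)) (s ((j:ℕ)+1)) ∧ f x = z₀ := by
    intro ⟨j, hj⟩
    have hj' : j ≤ n := by omega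
    have hlt := hmono j hj'
    have hcont := hf.continuousOn (s := Set.Icc (s j) (s (j+1)))
    rcases mul_neg_iff.1 (halt j hj') with ⟨h1, h2⟩ | ⟨h1, h2⟩
    · -- f (s j) > z₀ > f (s (j+1))
      have : z₀ ∈ Set.Ioo (f (s (j+1))) (f (s j)) := ⟨by linarith, by linarith⟩
      obtain ⟨x, hx, hfx⟩ := intermediate_value_Ioo' (le_of_lt hlt) hcont this
      exact ⟨x, hx, hfx⟩
    · have : z₀ ∈ Set.Ioo (f (s j)) (f (s (j+1))) := ⟨by linarith, by linarith⟩
      obtain ⟨x, hx, hfx⟩ := intermediate_value_Ioo (le_of_lt hlt) hcont this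
      exact ⟨x, hx, hfx⟩
  choose x hx hfx using H
  have hsmono : ∀ j i, i ≤ j → j ≤ n + 1 → s i ≤ s j := by
    intro j
    induction j with
    | zero => intro i hi _; rw [Nat.le_zero.1 hi]
    | succ k ih =>
      intro i hi hk
      rcases Nat.lt_succ_iff_lt_or_eq.1 (Nat.lt_succ_of_le hi) with hik | hik
      · exact le_trans (ih i (by omega) (by omega)) (le_of_lt (hmono k (by omega)))
      · rw [hik]
  have hxinj : Function.Injective x := by
    have hlt : ∀ i j : Fin (n+1), i < j → x i < x j := by
      intro i j hij
      have h1 : x i < s ((i:ℕ)+1) := (hx i).2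
      have h2 : s ((i:ℕ)+1) ≤ s (j:ℕ) := hsmono (j:ℕ) ((i:ℕ)+1) (by omega) (by omega)
      have h3 : s (j:ℕ) < x j := (hx j).1
      linarith
    intro i j hij
    by_contra hne
    rcases lt_or_gt_of_ne hne with hl | hl
    · exact absurd hij (ne_of_lt (hlt i j hl))
    · exact absurd hij.symm (ne_of_lt (hlt j i hl))
  have hsub : ↑(Finset.image x Finset.univ) ⊆ {z ∈ Set.Icc (-1 : ℝ) 1 | f z = z₀} := by
    intro y hy
    simp only [Finset.coe_image, Set.mem_image, Finset.coe_univ, Set.mem_univ] at hy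
    obtain ⟨j, _, rfl⟩ := hy
    refine ⟨?_, hfx j⟩
    have h1 := (hx j).1
    have h2 := (hx j).2
    have m1 := (hmem (j:ℕ) (by omega)).1
    have m2 := (hmem ((j:ℕ)+1) (by omega)).2
    exact ⟨by linarith, by linarith⟩
  calc n + 1 = (Finset.image x Finset.univ).card := by
        rw [Finset.card_image_of_injective _ hxinj, Finset.card_univ, Fintype.card_fin]
    _ = (↑(Finset.image x Finset.univ) : Set ℝ).ncard := (Set.ncard_coe_finset _).symm
    _ ≤ _ := Set.ncard_le_ncard hsub hfin

lemma key_alt (a b' z₀ : ℝ) (hab : a * b' < 0) (ha : |z₀| < |a|) (hb : |z₀| < |b'|) :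
    (a - z₀) * (b' - z₀) < 0 := by
  rcases mul_neg_iff.1 hab with ⟨h1, h2⟩ | ⟨h1, h2⟩
  · -- a > 0, b' < 0
    have ha' : |a| = a := abs_of_pos h1
    have hb' : |b'| = -b' := abs_of_neg h2
    rw [ha'] at ha; rw [hb'] at hb
    have := le_abs_self z₀; have := neg_abs_le z₀
    apply mul_neg_of_pos_of_neg <;> linarith
  · have ha' : |a| = -a := abs_of_neg h1
    have hb' : |b'| = b' := abs_of_pos h2
    rw [ha'] at ha; rw [hb'] at hb
    have := le_abs_self z₀; have := neg_abs_le z₀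
    apply mul_neg_of_neg_of_pos <;> linarith

theorem part2 (h : ℝ) (hh : 0 < h) (hodd : ∀ j : ℕ, h ≠ (2 * (j : ℝ) + 1) * π / 2) :
    (∀ m : ℕ, 1 ≤ m →
      h ∈ Set.Ioo ((2 * (m : ℝ) - 1) * π / 2) ((2 * (m : ℝ) + 1) * π / 2) →
      ∃ ε > 0, ∀ z₀ : ℝ, |z₀| < ε →
        2 * m + 1 ≤ {z ∈ Set.Icc (-1 : ℝ) 1 | q z h = z₀}.ncard) := by
  intro m hm1 hmIoo
  obtain ⟨M, rfl⟩ : ∃ M, m = M + 1 := ⟨m - 1, by omega⟩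
  have hπ := Real.pi_pos
  have hlow : (2 * (M:ℝ) + 1) * π / 2 < h := by
    have := hmIoo.1; push_cast at this; linarith
  have hhigh : h < (2 * (M:ℝ) + 3) * π / 2 := by
    have := hmIoo.2; push_cast at this; linarith
  have hch : Real.cos h ≠ 0 := cos_ne_zero' h hh hodd
  -- the zeros b k
  set b : ℕ → ℝ := fun k => Real.sqrt (1 - ((k:ℝ) * π / h) ^ 2) with hbdef
  have hkh : ∀ k : ℕ, k ≤ M → (k:ℝ) * π < h := by
    intro k hk
    have : (k:ℝ) ≤ M := by exact_mod_cast hk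
    nlinarith
  have harg : ∀ k : ℕ, k ≤ M → 0 < 1 - ((k:ℝ) * π / h) ^ 2 := by
    intro k hk
    have h1 : (0:ℝ) ≤ (k:ℝ) * π / h := by positivity
    have h2 : (k:ℝ) * π / h < 1 := (div_lt_one hh).2 (hkh k hk)
    nlinarith
  have hbpos : ∀ k : ℕ, k ≤ M → 0 < b k := fun k hk => Real.sqrt_pos.2 (harg k hk)
  have hble : ∀ k : ℕ, b k ≤ 1 := by
    intro k
    show Real.sqrt (1 - ((k:ℝ) * π / h) ^ 2) ≤ 1
    apply Real.sqrt_le_one.mpr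
    nlinarith [sq_nonneg ((k:ℝ) * π / h)]
  have hqb : ∀ k : ℕ, k ≤ M → q (b k) h = (-1:ℝ)^k * b k := by
    intro k hk
    have h1 : b k ^ 2 = 1 - ((k:ℝ) * π / h) ^ 2 := Real.sq_sqrt (le_of_lt (harg k hk))
    have h2 : 1 - b k ^ 2 = ((k:ℝ) * π / h) ^ 2 := by linarith
    have h3 : Real.sqrt (1 - b k ^ 2) = (k:ℝ) * π / h := by
      rw [h2]; exact Real.sqrt_sq (by positivity)
    have h4 : h * ((k:ℝ) * π / h) = (k:ℝ) * π := by field_simp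
    have h5 : Real.cos ((k:ℝ) * π) = (-1:ℝ)^k := by
      simpa using Real.cos_nat_mul_pi_sub 0 k
    unfold q
    rw [h3, h4, h5]
  have hbmono : ∀ k k' : ℕ, k < k' → k' ≤ M → b k' < b k := by
    intro k k' hkk hk'
    apply Real.sqrt_lt_sqrt (le_of_lt (harg k' hk'))
    have h1 : (k:ℝ) < k' := by exact_mod_cast hkk
    have h2 : (0:ℝ) ≤ (k:ℝ) * π / h := by positivity
    have h3 : (k:ℝ) * π / h < (k':ℝ) * π / h := by
      gcongr
    nlinarith
  -- b M ≤ b j for j ≤ M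
  have hbM : ∀ k : ℕ, k ≤ M → b M ≤ b k := by
    intro k hk
    rcases eq_or_lt_of_le hk with rfl | hlt
    · exact le_refl _
    · exact le_of_lt (hbmono k M hlt (le_refl M))
  -- sign of cos h
  have hcospos : 0 < Real.cos (((M:ℝ) + 1) * π - h) := by
    apply Real.cos_pos_of_mem_Ioo
    constructor
    · linarith
    · linarith
  have hcosh : Real.cos h = (-1:ℝ)^(M+1) * Real.cos (((M:ℝ) + 1) * π - h) := by
    have e := Real.cos_nat_mul_pi_sub (((M:ℝ) + 1) * π - h) (M + 1)
    rw [show ((M+1:ℕ):ℝ) * π - (((M:ℝ) + 1) * π - h) = h by push_cast; ring] at e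
    exact e
  have hsq : ((-1:ℝ))^(M+1) * ((-1:ℝ))^(M+1) = 1 := by
    rw [← pow_add]; exact Even.neg_one_pow ⟨M+1, by ring⟩
  have hcoshsign : 0 < Real.cos h * (-1:ℝ)^(M+1) := by
    rw [hcosh]; nlinarith
  -- the δ point
  set c : ℝ → ℝ := fun z => Real.cos (h * Real.sqrt (1 - z ^ 2)) with hcdef
  have hccont : Continuous c := by rw [hcdef]; fun_prop
  have hc0 : c 0 = Real.cos h := by
    rw [hcdef]; norm_num
  obtain ⟨δ₀, hδ₀pos, hδ₀⟩ := Metric.continuousAt_iff.1 hccont.continuousAt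
    |Real.cos h| (abs_pos.2 hch)
  obtain ⟨δ, hδpos, hδltbM, hδhalf, hδsmall⟩ :
      ∃ δ : ℝ, 0 < δ ∧ δ < b M ∧ δ ≤ 1 / 2 ∧ dist δ (0:ℝ) < δ₀ := by
    have hbMpos := hbpos M (le_refl M)
    refine ⟨min (min (δ₀ / 2) (b M / 2)) (1 / 2), ?_, ?_, ?_, ?_⟩
    · apply lt_min (lt_min (by linarith) (by linarith)) (by norm_num)
    · have h1 : min (min (δ₀ / 2) (b M / 2)) (1 / 2) ≤ b M / 2 :=
        le_trans (min_le_left _ _) (min_le_right _ _)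
      linarith
    · exact min_le_right _ _
    · have h1 : min (min (δ₀ / 2) (b M / 2)) (1 / 2) ≤ δ₀ / 2 :=
        le_trans (min_le_left _ _) (min_le_left _ _)
      have h2 : 0 < min (min (δ₀ / 2) (b M / 2)) (1 / 2) :=
        lt_min (lt_min (by linarith) (by linarith)) (by norm_num)
      rw [Real.dist_eq, sub_zero, abs_of_pos h2]
      linarith
  have hcδcosh : 0 < c δ * Real.cos h := by
    have h1 := hδ₀ hδsmall
    rw [hc0, Real.dist_eq] at h1
    have h2 := abs_lt.1 h1
    rcases lt_or_gt_of_ne hch with hl | hl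
    · have : |Real.cos h| = -Real.cos h := abs_of_neg hl
      rw [this] at h2
      have : c δ < 0 := by linarith [h2.2]
      exact mul_pos_of_neg_of_neg this hl
    · have : |Real.cos h| = Real.cos h := abs_of_pos hl
      rw [this] at h2
      have : 0 < c δ := by linarith [h2.1]
      exact mul_pos this hl
  have hcδsign : 0 < c δ * (-1:ℝ)^(M+1) := by
    have hch2 : 0 < Real.cos h ^ 2 := sq_pos_iff.2 hch
    nlinarith
  have hqδ : q δ h = c δ * δ := rfl
  have hqδsign : 0 < q δ h * (-1:ℝ)^(M+1) := by
    rw [hqδ]; nlinarith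
  have hqδne : q δ h ≠ 0 := by
    intro h0; rw [h0] at hqδsign; simp at hqδsign
  -- choose ε
  refine ⟨min (min (b M) |q δ h|) (1 / 2), ?_, ?_⟩
  · apply lt_min (lt_min (hbpos M (le_refl M)) (abs_pos.2 hqδne)) (by norm_num)
  intro z₀ hz₀
  have hz₀bM : |z₀| < b M := lt_of_lt_of_le hz₀ (le_trans (min_le_left _ _) (min_le_left _ _))
  have hz₀qδ : |z₀| < |q δ h| := lt_of_lt_of_le hz₀ (le_trans (min_le_left _ _) (min_le_right _ _))
  have hz₀1 : |z₀| < 1 := lt_of_lt_of_le hz₀ (le_trans (min_le_right _ _) (by norm_num))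
  -- the sample points
  set s : ℕ → ℝ := fun j =>
    if j < M + 1 then -(b j) else if j = M + 1 then -δ else if j = M + 2 then δ
    else b (2 * M + 3 - j) with hsdef
  have hs1 : ∀ j : ℕ, j ≤ M → s j = -(b j) := by
    intro j hj; simp only [hsdef]; rw [if_pos (by omega)]
  have hs2 : s (M + 1) = -δ := by
    simp only [hsdef]; rw [if_neg (by omega)]; simp
  have hs3 : s (M + 2) = δ := by
    simp only [hsdef]; rw [if_neg (by omega), if_neg (by omega)]; simp
  have hs4 : ∀ j : ℕ, M + 3 ≤ j → s j = b (2 * M + 3 - j) := by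
    intro j hj; simp only [hsdef]; rw [if_neg (by omega), if_neg (by omega), if_neg (by omega)]
  -- values of q at sample points
  have hv1 : ∀ j : ℕ, j ≤ M → q (s j) h = -((-1:ℝ)^j * b j) := by
    intro j hj; rw [hs1 j hj, q_neg, hqb j hj]
  have hv4 : ∀ j : ℕ, M + 3 ≤ j → j ≤ 2 * M + 3 →
      q (s j) h = (-1:ℝ)^(2 * M + 3 - j) * b (2 * M + 3 - j) := by
    intro j hj1 hj2; rw [hs4 j hj1, hqb _ (by omega)]
  have hv2 : q (s (M + 1)) h = -(q δ h) := by rw [hs2, q_neg]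
  have hv3 : q (s (M + 2)) h = q δ h := by rw [hs3]
  -- |q| at sample points exceeds |z₀|
  have hQ : ∀ j : ℕ, j ≤ 2 * M + 3 → |z₀| < |q (s j) h| := by
    intro j hj
    by_cases h1 : j ≤ M
    · rw [hv1 j h1, abs_neg, abs_mul, abs_pow, abs_neg, abs_one, one_pow, one_mul,
        abs_of_pos (hbpos j h1)]
      exact lt_of_lt_of_le hz₀bM (hbM j h1)
    by_cases h2 : j = M + 1
    · rw [h2, hv2, abs_neg]; exact hz₀qδ
    by_cases h3 : j = M + 2
    · rw [h3, hv3]; exact hz₀qδ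
    · have h4 : M + 3 ≤ j := by omega
      rw [hv4 j h4 hj, abs_mul, abs_pow, abs_neg, abs_one, one_pow, one_mul,
        abs_of_pos (hbpos _ (by omega))]
      exact lt_of_lt_of_le hz₀bM (hbM _ (by omega))
  -- monotonicity
  have hmono : ∀ j : ℕ, j ≤ 2 * M + 2 → s j < s (j + 1) := by
    intro j hj
    by_cases h1 : j + 1 ≤ M
    · rw [hs1 j (by omega), hs1 (j + 1) h1]
      have := hbmono j (j + 1) (by omega) h1; linarith
    by_cases h2 : j = M
    · rw [h2, hs1 M (le_refl M), hs2]; linarith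
    by_cases h3 : j = M + 1
    · rw [h3, hs2, hs3]; linarith
    by_cases h4 : j = M + 2
    · rw [h4, hs3, hs4 (M + 3) (le_refl _), show 2 * M + 3 - (M + 3) = M by omega]
      exact hδltbM
    · have h5 : M + 3 ≤ j := by omega
      rw [hs4 j h5, hs4 (j + 1) (by omega)]
      exact hbmono (2 * M + 3 - (j + 1)) (2 * M + 3 - j) (by omega) (by omega)
  -- membership
  have hmem : ∀ j : ℕ, j ≤ 2 * M + 3 → s j ∈ Set.Icc (-1:ℝ) 1 := by
    intro j hj
    by_cases h1 : j ≤ M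
    · rw [hs1 j h1]
      constructor
      · simp only [neg_le_neg_iff]; exact hble j
      · have := hbpos j h1; linarith
    by_cases h2 : j = M + 1
    · rw [h2, hs2]; constructor <;> [linarith; linarith]
    by_cases h3 : j = M + 2
    · rw [h3, hs3]; constructor <;> [linarith; linarith]
    · have h4 : M + 3 ≤ j := by omega
      rw [hs4 j h4]
      constructor
      · have := hbpos (2 * M + 3 - j) (by omega); linarith
      · exact hble _
  -- sign alternation of q at sample points
  have hE : ∀ k : ℕ, ((-1:ℝ))^k * (-1:ℝ)^(k + 1) = -1 := by
    intro k; rw [← pow_add]; exact Odd.neg_one_pow ⟨k, by omega⟩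
  have hEsq : ∀ k : ℕ, ((-1:ℝ))^k * (-1:ℝ)^k = 1 := by
    intro k; rw [← pow_add]; exact Even.neg_one_pow ⟨k, by omega⟩
  have hP : ∀ j : ℕ, j ≤ 2 * M + 2 → q (s j) h * q (s (j + 1)) h < 0 := by
    have e1 : q δ h * (-1:ℝ)^M < 0 := by
      have hx := hqδsign
      rw [pow_succ, show q δ h * ((-1:ℝ)^M * -1) = -(q δ h * (-1:ℝ)^M) by ring] at hx
      exact neg_pos.mp hx
    intro j hj
    by_cases h1 : j + 1 ≤ M
    · rw [hv1 j (by omega), hv1 (j + 1) h1]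
      have e := hE j
      have heq : -((-1:ℝ)^j * b j) * -((-1:ℝ)^(j+1) * b (j+1))
          = ((-1:ℝ)^j * (-1:ℝ)^(j+1)) * (b j * b (j+1)) := by ring
      rw [heq, e]
      have := mul_pos (hbpos j (by omega)) (hbpos (j + 1) h1)
      linarith
    by_cases h2 : j = M
    · rw [h2, hv1 M (le_refl M), hv2]
      rw [show -((-1:ℝ)^M * b M) * -(q δ h) = (q δ h * (-1:ℝ)^M) * b M by ring]
      exact mul_neg_of_neg_of_pos e1 (hbpos M (le_refl M))
    by_cases h3 : j = M + 1
    · rw [h3, hv2, hv3]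
      rw [show -(q δ h) * q δ h = -(q δ h ^ 2) by ring]
      exact neg_lt_zero.2 (sq_pos_iff.2 hqδne)
    by_cases h4 : j = M + 2
    · rw [h4, hv3, hv4 (M + 3) (le_refl _) (by omega), show 2 * M + 3 - (M + 3) = M by omega]
      rw [show q δ h * ((-1:ℝ)^M * b M) = (q δ h * (-1:ℝ)^M) * b M by ring]
      exact mul_neg_of_neg_of_pos e1 (hbpos M (le_refl M))
    · have h5 : M + 3 ≤ j := by omega
      rw [hv4 j h5 (by omega), hv4 (j + 1) (by omega) (by omega)]
      have hidx : 2 * M + 3 - j = (2 * M + 3 - (j + 1)) + 1 := by omega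
      rw [hidx]
      set k := 2 * M + 3 - (j + 1) with hk
      have e := hE k
      rw [show ((-1:ℝ)^(k+1) * b (k+1)) * ((-1:ℝ)^k * b k)
          = ((-1:ℝ)^k * (-1:ℝ)^(k+1)) * (b (k+1) * b k) by ring, e]
      have := mul_pos (hbpos (k + 1) (by omega)) (hbpos k (by omega))
      linarith
  -- finiteness
  have hδsq : δ ^ 2 < 1 := by
    have h01 : δ < 1 := lt_of_le_of_lt hδhalf (by norm_num)
    calc δ ^ 2 < 1 ^ 2 := by
          apply pow_lt_pow_left₀ h01 (le_of_lt hδpos)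
          norm_num
      _ = 1 := one_pow 2
  have hqδz₀ : q δ h ≠ z₀ := by
    intro he; rw [← he] at hz₀qδ; exact lt_irrefl _ hz₀qδ
  have hfin := finite_sols h z₀ hz₀1 δ hδsq hqδz₀
  -- conclude
  have halt : ∀ j : ℕ, j ≤ 2 * M + 2 →
      (q (s j) h - z₀) * (q (s (j + 1)) h - z₀) < 0 := by
    intro j hj
    exact key_alt _ _ _ (hP j hj) (hQ j (by omega)) (hQ (j + 1) (by omega))
  have hres := count_alt (fun w => q w h) (continuous_q h) (2 * M + 2) s z₀ hmono halt hmem hfin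
  have : 2 * (M + 1) + 1 = 2 * M + 2 + 1 := by ring
  rw [this]
  exact hres

/-- If `h > 0` is not an odd multiple of `π/2`, then all zeros of `q(·,h)` in `(−1,1)` are
simple, and for `m ≥ 1` and `h ∈ ((2m−1)π/2, (2m+1)π/2)` there is `ε > 0` such that every
`z₀` with `|z₀| < ε` has at least `2m+1` preimages in `[−1,1]` under `q(·,h)`. -/
theorem stmt_11 (h : ℝ) (hh : 0 < h) (hodd : ∀ j : ℕ, h ≠ (2 * (j : ℝ) + 1) * π / 2) :
    (∀ z ∈ Set.Ioo (-1 : ℝ) 1, q z h = 0 → deriv (fun w => q w h) z ≠ 0) ∧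
    (∀ m : ℕ, 1 ≤ m →
      h ∈ Set.Ioo ((2 * (m : ℝ) - 1) * π / 2) ((2 * (m : ℝ) + 1) * π / 2) →
      ∃ ε > 0, ∀ z₀ : ℝ, |z₀| < ε →
        2 * m + 1 ≤ {z ∈ Set.Icc (-1 : ℝ) 1 | q z h = z₀}.ncard) := by
  constructor
  · intro z hz hq
    have hz2 : z ^ 2 < 1 := by
      rcases hz with ⟨h1, h2⟩; nlinarith
    have h1 : (0:ℝ) < 1 - z ^ 2 := by linarith
    have hs : 0 < Real.sqrt (1 - z ^ 2) := Real.sqrt_pos.2 h1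
    rw [(hasDerivAt_q h z hz2).deriv]
    rcases mul_eq_zero.1 hq with hc | hz0
    · have hzne : z ≠ 0 := by
        rintro rfl
        simp at hc
        exact cos_ne_zero' h hh hodd hc
      have hsin : Real.sin (h * Real.sqrt (1 - z ^ 2)) ≠ 0 := by
        intro hs0
        have := Real.sin_sq_add_cos_sq (h * Real.sqrt (1 - z ^ 2))
        rw [hs0, hc] at this; norm_num at this
      rw [hc]
      have : h * z ^ 2 / Real.sqrt (1 - z ^ 2) ≠ 0 := by
        apply div_ne_zero _ (ne_of_gt hs)
        positivity
      simpa using mul_ne_zero this hsin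
    · subst hz0
      simp only [ne_eq]
      norm_num
      exact cos_ne_zero' h hh hodd
  · exact part2 h hh hodd
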